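/- Fix a probability mass function P on a finite set 𝒰. Then the infimum, over all pairs of nonnegative functions Ã, B̃ : 𝒰 → [0, ∞) with Ã(u) + B̃(u) = 2P(u) for every u ∈ 𝒰, of (1/2)γ̄(Ã) + (1/2)γ̄(B̃) equals the infimum of the same quantity restricted to pairs Ã, B̃ with disjoint supports (i.e., for every u ∈ 𝒰, Ã(u) = 0 or B̃(u) = 0). -/
import Mathlib

open Finset

noncomputable def extGuesswork {U : Type*} [Fintype U] (A : U → ℝ) : ℝ :=
  ⨅ G : U ≃ Fin (Fintype.card U), ∑ u, ((G u).val + 1 : ℝ) * A u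

section aux
variable {U : Type*} [Fintype U]

lemma bdd_range (A : U → ℝ) :
    BddBelow (Set.range fun G : U ≃ Fin (Fintype.card U) =>
      ∑ u, ((G u).val + 1 : ℝ) * A u) :=
  (Set.finite_range _).bddBelow

lemma extGuesswork_le (A : U → ℝ) (G : U ≃ Fin (Fintype.card U)) :
    extGuesswork A ≤ ∑ u, ((G u).val + 1 : ℝ) * A u :=
  ciInf_le (bdd_range A) G

lemma extGuesswork_nonneg {A : U → ℝ} (h : ∀ u, 0 ≤ A u) : 0 ≤ extGuesswork A := by
  have : Nonempty (U ≃ Fin (Fintype.card U)) := ⟨Fintype.equivFin U⟩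
  refine le_ciInf fun G => Finset.sum_nonneg fun u _ => ?_
  have : (0:ℝ) ≤ ((G u).val + 1 : ℝ) := by positivity
  exact mul_nonneg this (h u)

lemma extGuesswork_concave {A B C : U → ℝ} {a b : ℝ} (ha : 0 ≤ a) (hb : 0 ≤ b)
    (h : ∀ u, C u = a * A u + b * B u) :
    a * extGuesswork A + b * extGuesswork B ≤ extGuesswork C := by
  have : Nonempty (U ≃ Fin (Fintype.card U)) := ⟨Fintype.equivFin U⟩
  refine le_ciInf fun G => ?_
  have hA := extGuesswork_le A G
  have hB := extGuesswork_le B G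
  have hC : ∑ u, ((G u).val + 1 : ℝ) * C u
      = a * ∑ u, ((G u).val + 1 : ℝ) * A u + b * ∑ u, ((G u).val + 1 : ℝ) * B u := by
    rw [Finset.mul_sum, Finset.mul_sum, ← Finset.sum_add_distrib]
    exact Finset.sum_congr rfl fun u _ => by rw [h u]; ring
  rw [hC]
  exact add_le_add (mul_le_mul_of_nonneg_left hA ha) (mul_le_mul_of_nonneg_left hB hb)

lemma step [DecidableEq U] (P A B : U → ℝ) (hA : ∀ u, 0 ≤ A u) (hB : ∀ u, 0 ≤ B u)
    (hAB : ∀ u, A u + B u = 2 * P u) (u : U) :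
    ∃ A' B' : U → ℝ, (∀ v, 0 ≤ A' v) ∧ (∀ v, 0 ≤ B' v) ∧
      (∀ v, A' v + B' v = 2 * P v) ∧
      (∀ v, v ≠ u → A' v = A v ∧ B' v = B v) ∧ (A' u = 0 ∨ B' u = 0) ∧
      (1/2) * extGuesswork A' + (1/2) * extGuesswork B'
        ≤ (1/2) * extGuesswork A + (1/2) * extGuesswork B := by
  set c := 2 * P u with hc
  rcases eq_or_lt_of_le (hA u) with h0 | h0
  · exact ⟨A, B, hA, hB, hAB, fun v _ => ⟨rfl, rfl⟩, Or.inl h0.symm, le_refl _⟩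
  have hcpos : 0 < c := lt_of_lt_of_le h0 (le_trans (le_add_of_nonneg_right (hB u)) (le_of_eq (hAB u)))
  set l := A u / c with hl
  have hl0 : 0 ≤ l := div_nonneg (hA u) hcpos.le
  have hl1 : l ≤ 1 := by
    rw [hl, div_le_one hcpos]
    exact le_trans (le_add_of_nonneg_right (hB u)) (le_of_eq (hAB u))
  have hlc : l * c = A u := div_mul_cancel₀ _ hcpos.ne'
  set A0 := Function.update A u 0 with hA0
  set Ac := Function.update A u c with hAc
  set B0 := Function.update B u c with hB0
  set Bc := Function.update B u 0 with hBc
  have hAdec : ∀ v, A v = (1 - l) * A0 v + l * Ac v := by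
    intro v
    by_cases hv : v = u
    · rw [hv]
      simp only [hA0, hAc, Function.update_self]
      linear_combination -hlc
    · simp only [hA0, hAc, Function.update_of_ne hv]; ring
  have hBdec : ∀ v, B v = (1 - l) * B0 v + l * Bc v := by
    intro v
    by_cases hv : v = u
    · rw [hv]
      simp only [hB0, hBc, Function.update_self]
      linear_combination hAB u + hlc - hc
    · simp only [hB0, hBc, Function.update_of_ne hv]; ring
  have key : (1 - l) * ((1/2) * extGuesswork A0 + (1/2) * extGuesswork B0)
      + l * ((1/2) * extGuesswork Ac + (1/2) * extGuesswork Bc)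
      ≤ (1/2) * extGuesswork A + (1/2) * extGuesswork B := by
    have h1 := extGuesswork_concave (A := A0) (B := Ac) (C := A)
      (by linarith) hl0 hAdec
    have h2 := extGuesswork_concave (A := B0) (B := Bc) (C := B)
      (by linarith) hl0 hBdec
    nlinarith
  have nnA0 : ∀ v, 0 ≤ A0 v := fun v => by
    by_cases hv : v = u
    · subst hv; simp [hA0]
    · simp [hA0, Function.update_of_ne hv, hA v]
  have nnAc : ∀ v, 0 ≤ Ac v := fun v => by
    by_cases hv : v = u
    · subst hv; simp [hAc, hcpos.le]
    · simp [hAc, Function.update_of_ne hv, hA v]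
  have nnB0 : ∀ v, 0 ≤ B0 v := fun v => by
    by_cases hv : v = u
    · subst hv; simp [hB0, hcpos.le]
    · simp [hB0, Function.update_of_ne hv, hB v]
  have nnBc : ∀ v, 0 ≤ Bc v := fun v => by
    by_cases hv : v = u
    · subst hv; simp [hBc]
    · simp [hBc, Function.update_of_ne hv, hB v]
  have sum0 : ∀ v, A0 v + B0 v = 2 * P v := fun v => by
    by_cases hv : v = u
    · subst hv; simp [hA0, hB0, hc]
    · simp [hA0, hB0, Function.update_of_ne hv, hAB v]
  have sumc : ∀ v, Ac v + Bc v = 2 * P v := fun v => by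
    by_cases hv : v = u
    · subst hv; simp [hAc, hBc, hc]
    · simp [hAc, hBc, Function.update_of_ne hv, hAB v]
  by_cases hcase : (1/2) * extGuesswork A0 + (1/2) * extGuesswork B0
      ≤ (1/2) * extGuesswork Ac + (1/2) * extGuesswork Bc
  · refine ⟨A0, B0, nnA0, nnB0, sum0,
      fun v hv => ⟨Function.update_of_ne hv _ _, Function.update_of_ne hv _ _⟩,
      Or.inl (Function.update_self _ _ _), ?_⟩
    nlinarith
  · push_neg at hcase
    refine ⟨Ac, Bc, nnAc, nnBc, sumc,
      fun v hv => ⟨Function.update_of_ne hv _ _, Function.update_of_ne hv _ _⟩,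
      Or.inr (Function.update_self _ _ _), ?_⟩
    nlinarith

lemma reduce [DecidableEq U] (P : U → ℝ) (S : Finset U) :
    ∀ A B : U → ℝ, (∀ u, 0 ≤ A u) → (∀ u, 0 ≤ B u) → (∀ u, A u + B u = 2 * P u) →
    (∀ u, u ∉ S → A u = 0 ∨ B u = 0) →
    ∃ A' B' : U → ℝ, (∀ u, 0 ≤ A' u) ∧ (∀ u, 0 ≤ B' u) ∧
      (∀ u, A' u = 0 ∨ B' u = 0) ∧ (∀ u, A' u + B' u = 2 * P u) ∧
      (1/2) * extGuesswork A' + (1/2) * extGuesswork B'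
        ≤ (1/2) * extGuesswork A + (1/2) * extGuesswork B := by
  induction S using Finset.induction with
  | empty =>
    intro A B hA hB hAB hdisj
    exact ⟨A, B, hA, hB, fun u => hdisj u (Finset.notMem_empty u), hAB, le_refl _⟩
  | @insert a S ha ih =>
    intro A B hA hB hAB hdisj
    obtain ⟨A'', B'', hA'', hB'', hAB'', heq, hdisja, hle⟩ := step P A B hA hB hAB a
    obtain ⟨A', B', h1, h2, h3, h4, h5⟩ := ih A'' B'' hA'' hB'' hAB'' (fun u hu => by
      by_cases hua : u = a
      · subst hua; exact hdisja
      · obtain ⟨e1, e2⟩ := heq u hua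
        rw [e1, e2]
        exact hdisj u (by simp [hua, hu]))
    exact ⟨A', B', h1, h2, h3, h4, le_trans h5 hle⟩

end aux

theorem splitting_infimum_attained_on_disjoint_supports
    {U : Type*} [Fintype U]
    (P : U → ℝ)
    (hnn : ∀ u, 0 ≤ P u)
    (hsum : ∑ u, P u = 1) :
    sInf {r : ℝ | ∃ A B : U → ℝ,
        (∀ u, 0 ≤ A u) ∧ (∀ u, 0 ≤ B u) ∧
        (∀ u, A u + B u = 2 * P u) ∧
        r = (1 / 2) * extGuesswork A + (1 / 2) * extGuesswork B} =
    sInf {r : ℝ | ∃ A B : U → ℝ,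
        (∀ u, 0 ≤ A u) ∧ (∀ u, 0 ≤ B u) ∧
        (∀ u, A u = 0 ∨ B u = 0) ∧
        (∀ u, A u + B u = 2 * P u) ∧
        r = (1 / 2) * extGuesswork A + (1 / 2) * extGuesswork B} := by
  classical
  set S1 := {r : ℝ | ∃ A B : U → ℝ,
        (∀ u, 0 ≤ A u) ∧ (∀ u, 0 ≤ B u) ∧
        (∀ u, A u + B u = 2 * P u) ∧
        r = (1 / 2) * extGuesswork A + (1 / 2) * extGuesswork B} with hS1
  set S2 := {r : ℝ | ∃ A B : U → ℝ,
        (∀ u, 0 ≤ A u) ∧ (∀ u, 0 ≤ B u) ∧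
        (∀ u, A u = 0 ∨ B u = 0) ∧
        (∀ u, A u + B u = 2 * P u) ∧
        r = (1 / 2) * extGuesswork A + (1 / 2) * extGuesswork B} with hS2
  have hsub : S2 ⊆ S1 := by
    rintro r ⟨A, B, h1, h2, _, h4, h5⟩
    exact ⟨A, B, h1, h2, h4, h5⟩
  have hmem2 : ((1/2) * extGuesswork (fun u => 2 * P u) + (1/2) * extGuesswork (fun _ : U => 0)) ∈ S2 :=
    ⟨fun u => 2 * P u, fun _ => 0, fun u => by dsimp only; linarith [hnn u], fun u => le_refl 0,
      fun u => Or.inr rfl, fun u => by ring, rfl⟩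
  have hne2 : S2.Nonempty := ⟨_, hmem2⟩
  have hne1 : S1.Nonempty := ⟨_, hsub hmem2⟩
  have hbdd1 : BddBelow S1 := by
    refine ⟨0, ?_⟩
    rintro r ⟨A, B, h1, h2, h4, h5⟩
    have := extGuesswork_nonneg h1
    have := extGuesswork_nonneg h2
    rw [h5]; linarith
  have hbdd2 : BddBelow S2 := hbdd1.mono hsub
  refine le_antisymm (csInf_le_csInf hbdd1 hne2 hsub) (le_csInf hne1 ?_)
  rintro r ⟨A, B, h1, h2, h4, h5⟩
  obtain ⟨A', B', g1, g2, g3, g4, g5⟩ :=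
    reduce P Finset.univ A B h1 h2 h4 (fun u hu => absurd (Finset.mem_univ u) hu)
  have : ((1/2) * extGuesswork A' + (1/2) * extGuesswork B') ∈ S2 :=
    ⟨A', B', g1, g2, g3, g4, rfl⟩
  calc sInf S2 ≤ _ := csInf_le hbdd2 this
    _ ≤ r := by rw [h5]; exact g5
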